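/- Almost surely, |E[e | x]| ≤ ‖(I_d − P_{M̃})θ̃‖ · ‖E[z̃ | x] − P_{M̃} z̃‖, where ‖·‖ is the Euclidean norm and E[z̃ | x] denotes the componentwise conditional expectation of z̃ given the σ-algebra generated by x. Consequently, for every t > 0, P(|E[e|x]| > t) ≤ P(‖E[z̃|x] − P_{M̃} z̃‖ > t/‖(I_d − P_{M̃})θ̃‖) whenever (I_d − P_{M̃})θ̃ ≠ 0. -/

import Mathlib

open MeasureTheory Matrix ProbabilityTheory

private lemma l2mul {Ω : Type*} [MeasureSpace Ω] {f g : Ω → ℝ}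
    (hf : MemLp f 2 ℙ) (hg : MemLp g 2 ℙ) :
    Integrable (fun ω => f ω * g ω) ℙ := by
  refine Integrable.mono' (hf.integrable_sq.add hg.integrable_sq)
    (hf.aestronglyMeasurable.mul hg.aestronglyMeasurable) ?_
  filter_upwards with ω
  rw [Real.norm_eq_abs, abs_mul]
  show |f ω| * |g ω| ≤ f ω ^ 2 + g ω ^ 2
  nlinarith [sq_nonneg (|f ω| - |g ω|), sq_abs (f ω), sq_abs (g ω),
    abs_nonneg (f ω), abs_nonneg (g ω)]

private lemma quad_zero {A B : ℝ} (hB : 0 ≤ B)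
    (h : ∀ t : ℝ, 0 ≤ t ^ 2 * B - 2 * t * A) : A = 0 := by
  have hc : (0:ℝ) < B + 1 := by linarith
  set q := A / (B + 1) with hq
  have hA : A = q * (B + 1) := by rw [hq, div_mul_cancel₀ _ hc.ne']
  have h1 := h q
  rw [hA] at h1
  have : q = 0 := by nlinarith [sq_nonneg q]
  rw [hA, this, zero_mul]

private lemma cs_abs {n : ℕ} (u w : Fin n → ℝ) :
    |u ⬝ᵥ w| ≤ Real.sqrt (u ⬝ᵥ u) * Real.sqrt (w ⬝ᵥ w) := by
  have h := Finset.sum_mul_sq_le_sq_mul_sq Finset.univ u w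
  have h1 : u ⬝ᵥ u = ∑ i, u i ^ 2 := by simp [dotProduct, sq]
  have h2 : w ⬝ᵥ w = ∑ i, w i ^ 2 := by simp [dotProduct, sq]
  have h3 : |u ⬝ᵥ w| = Real.sqrt ((∑ i, u i * w i) ^ 2) := by
    rw [Real.sqrt_sq_eq_abs]; rfl
  rw [h1, h2, h3, ← Real.sqrt_mul (by positivity)]
  exact Real.sqrt_le_sqrt h

private lemma meas_mulVec {Ω : Type*} [MeasurableSpace Ω] {d q : ℕ}
    (A : Matrix (Fin q) (Fin d) ℝ) {z : Ω → Fin d → ℝ} (hz : Measurable z) :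
    Measurable fun ω => A *ᵥ z ω := by
  refine measurable_pi_lambda _ fun j => ?_
  have h1 : (fun ω => (A *ᵥ z ω) j) = fun ω => ∑ i, A j i * z ω i := by
    funext ω; simp [Matrix.mulVec, dotProduct]
  rw [h1]
  exact Finset.measurable_sum _ fun i _ => (hz.eval.const_mul _)

private lemma meas_affine {d q : ℕ} (A : Matrix (Fin q) (Fin d) ℝ) (μv : Fin d → ℝ) (k : Fin q) :
    Measurable fun w : Fin d → ℝ => (A *ᵥ (w - μv)) k := by
  have h1 : (fun w : Fin d → ℝ => (A *ᵥ (w - μv)) k)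
      = fun w => ∑ i, A k i * (w i - μv i) := by
    funext w; simp [Matrix.mulVec, dotProduct]
  rw [h1]
  exact Finset.measurable_sum _ fun i _ =>
    ((measurable_pi_apply i).sub measurable_const).const_mul _

/-- Almost surely,
`|E[e | x]| ≤ ‖(I_d − P_{M̃})θ̃‖ · ‖E[z̃ | x] − P_{M̃} z̃‖` (Euclidean norms);
consequently, for every `t > 0`,
`P(|E[e|x]| > t) ≤ P(‖E[z̃|x] − P_{M̃} z̃‖ > t/‖(I_d − P_{M̃})θ̃‖)`
whenever `(I_d − P_{M̃})θ̃ ≠ 0`. -/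
theorem stmt_7
    {Ω : Type*} [MeasureSpace Ω] [IsProbabilityMeasure (ℙ : Measure Ω)]
    {d p : ℕ} (hpd : p < d)
    (z : Ω → Fin d → ℝ) (hzm : Measurable z)
    (hz2 : ∀ i, MemLp (fun ω => z ω i) 2 ℙ)
    (μv : Fin d → ℝ) (hμ : ∀ i, ∫ ω, z ω i = μv i)
    (Sg : Matrix (Fin d) (Fin d) ℝ) (hSgpd : Sg.PosDef)
    (hSg : ∀ i j, ∫ ω, (z ω i - μv i) * (z ω j - μv j) = Sg i j)
    (ε : Ω → ℝ) (hεm : Measurable ε) (hε2 : MemLp ε 2 ℙ)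
    (hεmean : ∫ ω, ε ω = 0)
    (σ2 : ℝ) (hσ2 : 0 < σ2) (hεvar : ∫ ω, (ε ω) ^ 2 = σ2)
    (hindep : IndepFun z ε)
    (ϑ : ℝ) (θ : Fin d → ℝ)
    (y : Ω → ℝ) (hy : ∀ ω, y ω = ϑ + θ ⬝ᵥ z ω + ε ω)
    (M : Matrix (Fin d) (Fin p) ℝ) (hM : M.rank = p)
    (x : Ω → Fin p → ℝ) (hx : ∀ ω, x ω = Mᵀ *ᵥ z ω)
    -- the surrogate parameters (α, β): the minimizers of E[(y − a − b'x)²]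
    (α : ℝ) (β : Fin p → ℝ)
    (hmin : ∀ (a : ℝ) (b : Fin p → ℝ),
        ∫ ω, (y ω - α - β ⬝ᵥ x ω) ^ 2 ≤ ∫ ω, (y ω - a - b ⬝ᵥ x ω) ^ 2)
    (e : Ω → ℝ) (he : ∀ ω, e ω = y ω - α - β ⬝ᵥ x ω)
    (s2 : ℝ) (hs2 : s2 = ∫ ω, (e ω) ^ 2)
    -- the representation z = μ + Σ^{1/2} R z̃ with Σ^{1/2} the symmetric positive
    -- definite square root of Σ, R orthogonal, E[z̃] = 0 and E[z̃ z̃'] = I_d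
    (S : Matrix (Fin d) (Fin d) ℝ) (hSpd : S.PosDef) (hSsq : S * S = Sg)
    (R : Matrix (Fin d) (Fin d) ℝ) (hR : Rᵀ * R = 1)
    (zt : Ω → Fin d → ℝ) (hztm : Measurable zt)
    (hzt2 : ∀ i, MemLp (fun ω => zt ω i) 2 ℙ)
    (hztmean : ∀ i, ∫ ω, zt ω i = 0)
    (hztcov : ∀ i j, ∫ ω, zt ω i * zt ω j = (1 : Matrix (Fin d) (Fin d) ℝ) i j)
    (hzrep : ∀ ω, z ω = μv + S *ᵥ (R *ᵥ zt ω))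
    -- θ̃ = R'Σ^{1/2}θ, M̃ = R'Σ^{1/2}M and the projection P = M̃(M̃'M̃)⁻¹M̃'
    (θt : Fin d → ℝ) (hθt : θt = Rᵀ *ᵥ (S *ᵥ θ))
    (Mt : Matrix (Fin d) (Fin p) ℝ) (hMt : Mt = Rᵀ * S * M)
    (P : Matrix (Fin d) (Fin d) ℝ) (hP : P = Mt * (Mtᵀ * Mt)⁻¹ * Mtᵀ)
    -- the σ-algebra generated by x
    (mx : MeasurableSpace Ω) (hmx : mx = MeasurableSpace.comap x inferInstance)
    :
    (∀ᵐ ω ∂ℙ, |(ℙ[e|mx]) ω| ≤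
        Real.sqrt (((1 - P) *ᵥ θt) ⬝ᵥ ((1 - P) *ᵥ θt)) *
          Real.sqrt ((fun i => (ℙ[fun ω' => zt ω' i|mx]) ω - (P *ᵥ zt ω) i) ⬝ᵥ
            (fun i => (ℙ[fun ω' => zt ω' i|mx]) ω - (P *ᵥ zt ω) i))) ∧
    (∀ t : ℝ, 0 < t → (1 - P) *ᵥ θt ≠ 0 →
      ℙ {ω | t < |(ℙ[e|mx]) ω|} ≤
        ℙ {ω | t / Real.sqrt (((1 - P) *ᵥ θt) ⬝ᵥ ((1 - P) *ᵥ θt)) <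
            Real.sqrt ((fun i => (ℙ[fun ω' => zt ω' i|mx]) ω - (P *ᵥ zt ω) i) ⬝ᵥ
              (fun i => (ℙ[fun ω' => zt ω' i|mx]) ω - (P *ᵥ zt ω) i))}) := by
  -- basic matrix facts
  have hRR : R * Rᵀ = 1 := by rwa [mul_eq_one_comm] at hR
  have hSdet : IsUnit S.det := hSpd.det_pos.ne'.isUnit
  have hSinv : S⁻¹ * S = 1 := Matrix.nonsing_inv_mul _ hSdet
  have hSsym : Sᵀ = S := by
    have h := hSpd.1
    rwa [Matrix.IsHermitian, conjTranspose_eq_transpose_of_trivial] at h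
  have hθtm : θt = (Rᵀ * S) *ᵥ θ := by rw [hθt, mulVec_mulVec]
  -- u, c
  set u : Fin d → ℝ := θt - Mt *ᵥ β with hu
  set c : ℝ := ϑ + θ ⬝ᵥ μv - α - (M *ᵥ β) ⬝ᵥ μv with hc
  -- dot products with z
  have hdotz : ∀ (a : Fin d → ℝ) (ω : Ω),
      a ⬝ᵥ z ω = a ⬝ᵥ μv + ((Rᵀ * S) *ᵥ a) ⬝ᵥ zt ω := by
    intro a ω
    rw [hzrep ω, dotProduct_add, mulVec_mulVec, dotProduct_mulVec,
      ← mulVec_transpose, transpose_mul, hSsym]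
  have hbx : ∀ (b : Fin p → ℝ) (ω : Ω),
      b ⬝ᵥ x ω = (M *ᵥ b) ⬝ᵥ μv + (Mt *ᵥ b) ⬝ᵥ zt ω := by
    intro b ω
    rw [hx ω, dotProduct_mulVec, vecMul_transpose, hdotz (M *ᵥ b) ω,
      mulVec_mulVec, ← hMt]
  -- representation of e
  have he2rep : ∀ ω, e ω = c + u ⬝ᵥ zt ω + ε ω := by
    intro ω
    rw [he ω, hy ω, hdotz θ ω, hbx β ω, ← hθtm, hu, sub_dotProduct, hc]
    ring
  have hudot : ∀ ω, u ⬝ᵥ zt ω = ∑ i, u i * zt ω i := fun ω => rfl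
  -- integrability
  have hεint : Integrable ε ℙ := hε2.integrable one_le_two
  have hztint : ∀ i, Integrable (fun ω => zt ω i) ℙ :=
    fun i => (hzt2 i).integrable one_le_two
  have hsum2 : MemLp (fun ω => ∑ i, u i * zt ω i) 2 ℙ :=
    memLp_finset_sum _ fun i _ => ((hzt2 i).const_mul (u i))
  have he2p : MemLp e 2 ℙ := by
    have h1 : e = fun ω => (c + ∑ i, u i * zt ω i) + ε ω := by
      funext ω; rw [he2rep ω, hudot ω]
    have h2 : MemLp (fun ω => c + ∑ i, u i * zt ω i) 2 ℙ := (memLp_const c).add hsum2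
    rw [h1]
    exact h2.add hε2
  have heint : Integrable e ℙ := he2p.integrable one_le_two
  -- measurability of x and mx ≤ m0
  have hxm : Measurable[MeasureSpace.toMeasurableSpace] x := by
    have hxe : x = fun ω => Mᵀ *ᵥ z ω := funext hx
    rw [hxe]
    exact @meas_mulVec Ω MeasureSpace.toMeasurableSpace d p Mᵀ z hzm
  have hmxle : mx ≤ (MeasureSpace.toMeasurableSpace : MeasurableSpace Ω) := by
    rw [hmx]; exact hxm.comap_le
  -- normal equations
  have hA : ∀ (a : ℝ) (b : Fin p → ℝ), ∫ ω, e ω * (a + b ⬝ᵥ x ω) = 0 := by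
    intro a b
    set g : Ω → ℝ := fun ω => a + b ⬝ᵥ x ω with hg
    have hg2 : MemLp g 2 ℙ := by
      have hgrw : g = fun ω => (a + (M *ᵥ b) ⬝ᵥ μv) + ∑ k, (Mt *ᵥ b) k * zt ω k := by
        funext ω
        show a + b ⬝ᵥ x ω = _
        rw [hbx b ω, show (Mt *ᵥ b) ⬝ᵥ zt ω = ∑ k, (Mt *ᵥ b) k * zt ω k from rfl]
        ring
      rw [hgrw]
      exact (memLp_const (a + (M *ᵥ b) ⬝ᵥ μv)).add (memLp_finset_sum (f := fun k ω => (Mt *ᵥ b) k * zt ω k) _ fun k _ => ((hzt2 k).const_mul _))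
    have hint_eg : Integrable (fun ω => e ω * g ω) ℙ := l2mul he2p hg2
    have hint_g2 : Integrable (fun ω => g ω ^ 2) ℙ := hg2.integrable_sq
    have hint_e2 : Integrable (fun ω => e ω ^ 2) ℙ := he2p.integrable_sq
    have key : ∀ t : ℝ, 0 ≤ t ^ 2 * (∫ ω, g ω ^ 2) - 2 * t * (∫ ω, e ω * g ω) := by
      intro t
      have h1 := hmin (α + t * a) (β + t • b)
      have hLHS : ∫ ω, (y ω - α - β ⬝ᵥ x ω) ^ 2 = ∫ ω, e ω ^ 2 := by
        refine integral_congr_ae (Filter.Eventually.of_forall fun ω => ?_)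
        dsimp only
        rw [he ω]
      have h2 : (fun ω => (y ω - (α + t * a) - (β + t • b) ⬝ᵥ x ω) ^ 2)
          = fun ω => e ω ^ 2 + ((-(2 * t)) * (e ω * g ω) + t ^ 2 * g ω ^ 2) := by
        funext ω
        rw [add_dotProduct, smul_dotProduct, he ω, hg]
        simp only [smul_eq_mul]
        ring
      have hint2 : Integrable (fun ω => (-(2 * t)) * (e ω * g ω) + t ^ 2 * g ω ^ 2) ℙ :=
        (hint_eg.const_mul _).add (hint_g2.const_mul _)
      have h3 : ∫ ω, (y ω - (α + t * a) - (β + t • b) ⬝ᵥ x ω) ^ 2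
          = (∫ ω, e ω ^ 2) + ((-(2 * t)) * (∫ ω, e ω * g ω) + t ^ 2 * (∫ ω, g ω ^ 2)) := by
        rw [h2, integral_add hint_e2 hint2,
          integral_add (hint_eg.const_mul _) (hint_g2.const_mul _),
          integral_const_mul, integral_const_mul]
      rw [hLHS, h3] at h1
      linarith
    exact quad_zero (integral_nonneg fun ω => sq_nonneg (g ω)) key
  have he0 : ∫ ω, e ω = 0 := by
    have h1 := hA 1 0
    simpa using h1
  -- c = 0
  have hcint : Integrable (fun ω => ∑ i, u i * zt ω i) ℙ :=
    integrable_finset_sum _ fun i _ => (hztint i).const_mul _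
  have hceq : ∫ ω, e ω = c := by
    have h1 : e = fun ω => (c + ∑ i, u i * zt ω i) + ε ω := by
      funext ω; rw [he2rep ω, hudot ω]
    have hint1 : Integrable (fun ω => c + ∑ i, u i * zt ω i) ℙ :=
      (integrable_const c).add hcint
    rw [h1, integral_add hint1 hεint, integral_add (integrable_const c) hcint,
      integral_finset_sum _ (fun i _ => (hztint i).const_mul _), hεmean, integral_const]
    simp [hztmean, integral_const_mul, measure_univ]
  have hc0 : c = 0 := by rw [← hceq, he0]
  have he3 : ∀ ω, e ω = (∑ i, u i * zt ω i) + ε ω := by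
    intro ω; rw [he2rep ω, hc0, hudot ω]; ring
  -- independence of zt components from ε
  have hztz : ∀ ω, zt ω = (Rᵀ * S⁻¹) *ᵥ (z ω - μv) := by
    intro ω
    rw [hzrep ω, add_sub_cancel_left, mulVec_mulVec, mulVec_mulVec,
      show Rᵀ * S⁻¹ * S * R = 1 from by
        rw [Matrix.mul_assoc Rᵀ S⁻¹ S, hSinv, Matrix.mul_one, hR],
      one_mulVec]
  have hεzt : ∀ k, ∫ ω, ε ω * zt ω k = 0 := by
    intro k
    have hφ : Measurable fun w : Fin d → ℝ => ((Rᵀ * S⁻¹) *ᵥ (w - μv)) k :=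
      meas_affine (Rᵀ * S⁻¹) μv k
    have hI : IndepFun ε (fun ω => zt ω k) ℙ := by
      have hco : (fun ω => zt ω k)
          = (fun w : Fin d → ℝ => ((Rᵀ * S⁻¹) *ᵥ (w - μv)) k) ∘ z := by
        funext ω; simp only [Function.comp_apply]; rw [← hztz ω]
      rw [hco]
      exact hindep.symm.comp measurable_id hφ
    have h := hI.integral_fun_mul_eq_mul_integral hεint.aestronglyMeasurable (hztint k).aestronglyMeasurable
    simpa [hεmean] using h
  -- ∫ e·zt_k = u_k
  have heztint : ∀ k, Integrable (fun ω => e ω * zt ω k) ℙ :=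
    fun k => l2mul he2p (hzt2 k)
  have hez : ∀ k, ∫ ω, e ω * zt ω k = u k := by
    intro k
    have h1 : (fun ω => e ω * zt ω k)
        = fun ω => (∑ i, u i * (zt ω i * zt ω k)) + ε ω * zt ω k := by
      funext ω; rw [he3 ω, add_mul, Finset.sum_mul]
      congr 1
      exact Finset.sum_congr rfl fun i _ => by ring
    have hint1 : Integrable (fun ω => ∑ i, u i * (zt ω i * zt ω k)) ℙ :=
      integrable_finset_sum _ fun i _ => (l2mul (hzt2 i) (hzt2 k)).const_mul _
    rw [h1, integral_add hint1 (l2mul hε2 (hzt2 k)),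
      integral_finset_sum _ (fun i _ => (l2mul (hzt2 i) (hzt2 k)).const_mul _),
      hεzt k, add_zero]
    have h2 : ∀ i, ∫ ω, u i * (zt ω i * zt ω k)
        = u i * ((1 : Matrix (Fin d) (Fin d) ℝ) i k) := by
      intro i; rw [integral_const_mul, hztcov i k]
    simp only [h2, Matrix.one_apply, mul_ite, mul_one, mul_zero]
    simp
  -- Mtᵀ u = 0
  have hnorm : ∀ b : Fin p → ℝ, u ⬝ᵥ (Mt *ᵥ b) = 0 := by
    intro b
    have h0 := hA 0 b
    have h1 : (fun ω => e ω * (0 + b ⬝ᵥ x ω))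
        = fun ω => ((M *ᵥ b) ⬝ᵥ μv) * e ω + ∑ k, (Mt *ᵥ b) k * (e ω * zt ω k) := by
      funext ω; rw [zero_add, hbx b ω]
      show e ω * ((M *ᵥ b) ⬝ᵥ μv + ∑ k, (Mt *ᵥ b) k * zt ω k) = _
      rw [mul_add, Finset.mul_sum]
      congr 1
      · ring
      · exact Finset.sum_congr rfl fun k _ => by ring
    have hint1 : Integrable (fun ω => ∑ k, (Mt *ᵥ b) k * (e ω * zt ω k)) ℙ :=
      integrable_finset_sum _ fun k _ => (heztint k).const_mul _
    rw [h1, integral_add (heint.const_mul _) hint1, integral_const_mul, he0, mul_zero,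
      zero_add, integral_finset_sum _ (fun k _ => (heztint k).const_mul _)] at h0
    simp only [integral_const_mul, hez] at h0
    rw [dotProduct_comm]
    exact h0
  have hMtu : Mtᵀ *ᵥ u = 0 := by
    funext j
    have h := hnorm (Pi.single j 1)
    rw [mulVec_single] at h
    simpa [Matrix.mulVec, dotProduct, Matrix.transpose_apply, mul_comm] using h
  -- Mt injective, (MtᵀMt) invertible, P properties
  have hMinj : ∀ v : Fin p → ℝ, M *ᵥ v = 0 → v = 0 := by
    intro v hv
    have hfin : Module.finrank ℝ (LinearMap.ker M.mulVecLin) = 0 := by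
      have h1 := LinearMap.finrank_range_add_finrank_ker M.mulVecLin
      rw [Module.finrank_fin_fun] at h1
      have h2 : Module.finrank ℝ (LinearMap.range M.mulVecLin) = p := hM
      omega
    have hker : LinearMap.ker M.mulVecLin = ⊥ := Submodule.finrank_eq_zero.mp hfin
    have hvmem : v ∈ LinearMap.ker M.mulVecLin := by
      rw [LinearMap.mem_ker, Matrix.mulVecLin_apply, hv]
    rw [hker, Submodule.mem_bot] at hvmem
    exact hvmem
  have hMtinj : ∀ v : Fin p → ℝ, Mt *ᵥ v = 0 → v = 0 := by
    intro v hv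
    rw [hMt, ← mulVec_mulVec, ← mulVec_mulVec] at hv
    have h1 : R *ᵥ (Rᵀ *ᵥ (S *ᵥ (M *ᵥ v))) = 0 := by rw [hv, mulVec_zero]
    rw [mulVec_mulVec, hRR, one_mulVec] at h1
    have h2 : S⁻¹ *ᵥ (S *ᵥ (M *ᵥ v)) = 0 := by rw [h1, mulVec_zero]
    rw [mulVec_mulVec, hSinv, one_mulVec] at h2
    exact hMinj v h2
  have hPD : (Mtᵀ * Mt).PosDef := by
    rw [Matrix.posDef_iff_dotProduct_mulVec]
    constructor
    · have h := Matrix.isHermitian_conjTranspose_mul_self Mt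
      rwa [conjTranspose_eq_transpose_of_trivial] at h
    · intro v hv
      have h1 : star v ⬝ᵥ ((Mtᵀ * Mt) *ᵥ v) = (Mt *ᵥ v) ⬝ᵥ (Mt *ᵥ v) := by
        rw [star_trivial, ← mulVec_mulVec, dotProduct_mulVec, vecMul_transpose]
      rw [h1]
      have h2 : Mt *ᵥ v ≠ 0 := fun h => hv (hMtinj v h)
      obtain ⟨i, hi⟩ := Function.ne_iff.1 h2
      have h3 : (0:ℝ) < ∑ i, (Mt *ᵥ v) i * (Mt *ᵥ v) i := by
        refine Finset.sum_pos' (fun j _ => mul_self_nonneg _) ⟨i, Finset.mem_univ i, ?_⟩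
        exact mul_self_pos.2 (by simpa using hi)
      exact h3
  have hdet : IsUnit (Mtᵀ * Mt).det := hPD.det_pos.ne'.isUnit
  have hinv : (Mtᵀ * Mt)⁻¹ * (Mtᵀ * Mt) = 1 := Matrix.nonsing_inv_mul _ hdet
  have hPMt : P * Mt = Mt := by
    rw [hP, Matrix.mul_assoc (Mt * (Mtᵀ * Mt)⁻¹) Mtᵀ Mt,
      Matrix.mul_assoc Mt (Mtᵀ * Mt)⁻¹ (Mtᵀ * Mt), hinv, Matrix.mul_one]
  have hAT : (Mtᵀ * Mt)ᵀ = Mtᵀ * Mt := by rw [transpose_mul, transpose_transpose]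
  have hinvsym : ((Mtᵀ * Mt)⁻¹)ᵀ = (Mtᵀ * Mt)⁻¹ := by
    rw [Matrix.transpose_nonsing_inv, hAT]
  have hPsym : Pᵀ = P := by
    rw [hP, transpose_mul, transpose_mul, transpose_transpose, hinvsym,
      ← Matrix.mul_assoc]
  have hPu : P *ᵥ u = 0 := by
    rw [hP, ← mulVec_mulVec, hMtu, mulVec_zero]
  have hPθt : P *ᵥ θt = Mt *ᵥ β := by
    rw [show θt = u + Mt *ᵥ β from by rw [hu]; ext i; simp,
      mulVec_add, hPu, zero_add, mulVec_mulVec, hPMt]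
  have huv : (1 - P) *ᵥ θt = u := by
    rw [sub_mulVec, one_mulVec, hPθt, hu]
  -- conditional expectations
  haveI hSF : SigmaFinite (Measure.trim ℙ hmxle) := by infer_instance
  have hIεx : IndepFun ε x ℙ := by
    have hφx : Measurable fun w : Fin d → ℝ => Mᵀ *ᵥ w :=
      meas_mulVec Mᵀ measurable_id
    have hco : x = (fun w : Fin d → ℝ => Mᵀ *ᵥ w) ∘ z := funext fun ω => hx ω
    rw [hco]
    exact hindep.symm.comp measurable_id hφx
  have hind2 : Indep (MeasurableSpace.comap ε inferInstance) mx ℙ := by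
    rw [hmx]
    exact (IndepFun_iff_Indep ε x ℙ).mp hIεx
  have hεcond : ℙ[ε|mx] =ᵐ[ℙ] fun _ => (0:ℝ) := by
    have h := condExp_indep_eq hεm.comap_le hmxle
      (Measurable.stronglyMeasurable (comap_measurable ε)) hind2
    rw [show (∫ ω, ε ω ∂ℙ) = 0 from hεmean] at h
    exact h
  have hsmul : ∀ i : Fin d, ℙ[fun ω => u i * zt ω i|mx]
      =ᵐ[ℙ] fun ω => u i * (ℙ[fun ω' => zt ω' i|mx]) ω := by
    intro i
    have h := condExp_smul (μ := ℙ) (m := mx) (u i) (fun ω => zt ω i)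
    have h2 : (u i • fun ω => zt ω i) = fun ω => u i * zt ω i := by funext ω; simp
    rw [h2] at h
    filter_upwards [h] with ω hω
    rw [hω]; simp
  have hsum_cond : ℙ[(fun ω => ∑ i, u i * zt ω i)|mx] =ᵐ[ℙ]
      fun ω => ∑ i, u i * (ℙ[fun ω' => zt ω' i|mx]) ω := by
    have h1 := condExp_finset_sum (μ := ℙ) (m := mx) (s := Finset.univ)
      (f := fun i => fun ω => u i * zt ω i) (fun i _ => (hztint i).const_mul _)
    have h0 : (fun ω => ∑ i, u i * zt ω i) = ∑ i, (fun ω => u i * zt ω i) := by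
      funext ω; simp
    rw [h0]
    refine h1.trans ?_
    have h2 : ∀ᵐ ω ∂ℙ, ∀ i : Fin d,
        (ℙ[fun ω' => u i * zt ω' i|mx]) ω = u i * (ℙ[fun ω' => zt ω' i|mx]) ω :=
      ae_all_iff.2 fun i => hsmul i
    filter_upwards [h2] with ω hω
    simp only [Finset.sum_apply]
    exact Finset.sum_congr rfl fun i _ => hω i
  have hecond : ℙ[e|mx] =ᵐ[ℙ] fun ω => ∑ i, u i * (ℙ[fun ω' => zt ω' i|mx]) ω := by
    have hef : e = (fun ω => ∑ i, u i * zt ω i) + ε := funext fun ω => he3 ω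
    have h1 : ℙ[e|mx] =ᵐ[ℙ] ℙ[(fun ω => ∑ i, u i * zt ω i)|mx] + ℙ[ε|mx] := by
      rw [hef]; exact condExp_add hcint hεint mx
    refine h1.trans ?_
    filter_upwards [hsum_cond, hεcond] with ω h2 h3
    simp only [Pi.add_apply, h2, h3, add_zero]
  -- pointwise bound
  have hPzt : ∀ ω, u ⬝ᵥ (P *ᵥ zt ω) = 0 := by
    intro ω
    rw [dotProduct_mulVec, ← mulVec_transpose, hPsym, hPu, zero_dotProduct]
  have part1 : ∀ᵐ ω ∂ℙ, |(ℙ[e|mx]) ω| ≤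
      Real.sqrt (((1 - P) *ᵥ θt) ⬝ᵥ ((1 - P) *ᵥ θt)) *
        Real.sqrt ((fun i => (ℙ[fun ω' => zt ω' i|mx]) ω - (P *ᵥ zt ω) i) ⬝ᵥ
          (fun i => (ℙ[fun ω' => zt ω' i|mx]) ω - (P *ᵥ zt ω) i)) := by
    filter_upwards [hecond] with ω hω
    rw [hω]
    have hrw : ∑ i, u i * (ℙ[fun ω' => zt ω' i|mx]) ω
        = u ⬝ᵥ (fun i => (ℙ[fun ω' => zt ω' i|mx]) ω - (P *ᵥ zt ω) i) := by
      have h1 : u ⬝ᵥ (fun i => (ℙ[fun ω' => zt ω' i|mx]) ω - (P *ᵥ zt ω) i)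
          = (∑ i, u i * (ℙ[fun ω' => zt ω' i|mx]) ω) - u ⬝ᵥ (P *ᵥ zt ω) := by
        simp [dotProduct, mul_sub, Finset.sum_sub_distrib]
      rw [h1, hPzt ω, sub_zero]
    rw [hrw, huv]
    exact cs_abs u _
  refine ⟨part1, ?_⟩
  intro t ht hv
  have hu0 : u ≠ 0 := by rw [← huv]; exact hv
  have hupos : (0:ℝ) < u ⬝ᵥ u := by
    obtain ⟨i, hi⟩ := Function.ne_iff.1 hu0
    have h3 : (0:ℝ) < ∑ i, u i * u i := by
      refine Finset.sum_pos' (fun j _ => mul_self_nonneg _) ⟨i, Finset.mem_univ i, ?_⟩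
      exact mul_self_pos.2 (by simpa using hi)
    exact h3
  have hvpos : 0 < Real.sqrt (((1 - P) *ᵥ θt) ⬝ᵥ ((1 - P) *ᵥ θt)) := by
    rw [huv]; exact Real.sqrt_pos.2 hupos
  refine measure_mono_ae ?_
  filter_upwards [part1] with ω h1
  intro h2
  have h2' : t < |(ℙ[e|mx]) ω| := h2
  show t / Real.sqrt (((1 - P) *ᵥ θt) ⬝ᵥ ((1 - P) *ᵥ θt)) <
      Real.sqrt ((fun i => (ℙ[fun ω' => zt ω' i|mx]) ω - (P *ᵥ zt ω) i) ⬝ᵥ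
        (fun i => (ℙ[fun ω' => zt ω' i|mx]) ω - (P *ᵥ zt ω) i))
  rw [div_lt_iff₀ hvpos]
  calc t < |(ℙ[e|mx]) ω| := h2'
    _ ≤ _ := h1
    _ = _ := by ring
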